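/- If F is a homogeneous strict polynomial functor of degree n over a commutative Noetherian ring R and F(R^n) = 0, then F(P) = 0 for every finitely generated projective R-module P. -/

import Mathlib

open TensorProduct

universe u

/-- A strict polynomial functor over `R`: a function `obj` from finitely
generated projective `R`-modules to `R`-modules, together with, for every
commutative `R`-algebra `S`, structure maps
`Hom_S(S ⊗ P, S ⊗ Q) → Hom_S(S ⊗ F(P), S ⊗ F(Q))` preserving identities and
composition and commuting with extension of scalars. -/
structure SPF (R : Type u) [CommRing R] : Type (u + 1) where
  obj : ∀ (P : ModuleCat.{u} R), Module.Finite R ↥P → Module.Projective R ↥P → ModuleCat.{u} R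
  map : ∀ (P Q : ModuleCat.{u} R) (hP₁ : Module.Finite R ↥P) (hP₂ : Module.Projective R ↥P)
    (hQ₁ : Module.Finite R ↥Q) (hQ₂ : Module.Projective R ↥Q)
    (S : Type u) [CommRing S] [Algebra R S],
    (S ⊗[R] ↥P →ₗ[S] S ⊗[R] ↥Q) →
      (S ⊗[R] ↥(obj P hP₁ hP₂) →ₗ[S] S ⊗[R] ↥(obj Q hQ₁ hQ₂))
  map_id : ∀ (P : ModuleCat.{u} R) (hP₁ : Module.Finite R ↥P) (hP₂ : Module.Projective R ↥P)
    (S : Type u) [CommRing S] [Algebra R S],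
    map P P hP₁ hP₂ hP₁ hP₂ S LinearMap.id = LinearMap.id
  map_comp : ∀ (P₁ P₂ P₃ : ModuleCat.{u} R)
    (h₁ : Module.Finite R ↥P₁) (h₁' : Module.Projective R ↥P₁)
    (h₂ : Module.Finite R ↥P₂) (h₂' : Module.Projective R ↥P₂)
    (h₃ : Module.Finite R ↥P₃) (h₃' : Module.Projective R ↥P₃)
    (S : Type u) [CommRing S] [Algebra R S]
    (f : S ⊗[R] ↥P₂ →ₗ[S] S ⊗[R] ↥P₃) (g : S ⊗[R] ↥P₁ →ₗ[S] S ⊗[R] ↥P₂),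
    map P₁ P₃ h₁ h₁' h₃ h₃' S (f ∘ₗ g) =
      (map P₂ P₃ h₂ h₂' h₃ h₃' S f) ∘ₗ (map P₁ P₂ h₁ h₁' h₂ h₂' S g)
  map_baseChange : ∀ (P Q : ModuleCat.{u} R)
    (hP₁ : Module.Finite R ↥P) (hP₂ : Module.Projective R ↥P)
    (hQ₁ : Module.Finite R ↥Q) (hQ₂ : Module.Projective R ↥Q)
    (S S' : Type u) [CommRing S] [Algebra R S] [CommRing S'] [Algebra R S']
    (φ : S →ₐ[R] S')
    (f : S ⊗[R] ↥P →ₗ[S] S ⊗[R] ↥Q) (f' : S' ⊗[R] ↥P →ₗ[S'] S' ⊗[R] ↥Q),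
    (∀ x, f' (LinearMap.rTensor (↥P) φ.toLinearMap x) =
        LinearMap.rTensor (↥Q) φ.toLinearMap (f x)) →
    ∀ y, (map P Q hP₁ hP₂ hQ₁ hQ₂ S' f')
          (LinearMap.rTensor (↥(obj P hP₁ hP₂)) φ.toLinearMap y) =
        LinearMap.rTensor (↥(obj Q hQ₁ hQ₂)) φ.toLinearMap
          ((map P Q hP₁ hP₂ hQ₁ hQ₂ S f) y)

/-- A strict polynomial functor is homogeneous of degree `n` if
`F(λ • id) = λ ^ n • id` for every scalar `λ` of every `R`-algebra `S`. -/
def SPF.Homog {R : Type u} [CommRing R] (F : SPF R) (n : ℕ) : Prop :=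
  ∀ (P : ModuleCat.{u} R) (hP₁ : Module.Finite R ↥P) (hP₂ : Module.Projective R ↥P)
    (S : Type u) [CommRing S] [Algebra R S] (s : S),
    F.map P P hP₁ hP₂ hP₁ hP₂ S (s • LinearMap.id) = s ^ n • LinearMap.id


namespace SPFProofAux

open MvPolynomial

variable {R : Type u} [CommRing R]

theorem subs_tensor (S : Type u) (M : Type u) [CommRing S]
    [Algebra R S] [AddCommGroup M] [Module R M] (h : Subsingleton M) :
    Subsingleton (S ⊗[R] M) := by
  constructor
  have h0 : ∀ x : S ⊗[R] M, x = 0 := by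
    intro x
    have h2 : LinearMap.lTensor S (0 : M →ₗ[R] M) x = 0 := by simp
    rwa [show (0 : M →ₗ[R] M) = LinearMap.id from Subsingleton.elim _ _,
      LinearMap.lTensor_id, LinearMap.id_apply] at h2
  intro a b; rw [h0 a, h0 b]

theorem retract (F : SPF R) (P Q : ModuleCat.{u} R)
    (hP₁ : Module.Finite R ↥P) (hP₂ : Module.Projective R ↥P)
    (hQ₁ : Module.Finite R ↥Q) (hQ₂ : Module.Projective R ↥Q)
    (i : ↥P →ₗ[R] ↥Q) (p : ↥Q →ₗ[R] ↥P) (hpi : p ∘ₗ i = LinearMap.id)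
    (hQ : Subsingleton ↥(F.obj Q hQ₁ hQ₂)) : Subsingleton ↥(F.obj P hP₁ hP₂) := by
  have hsub : Subsingleton (R ⊗[R] ↥(F.obj Q hQ₁ hQ₂)) := subs_tensor R _ hQ
  have key : F.map Q P hQ₁ hQ₂ hP₁ hP₂ R (p.baseChange R) ∘ₗ
      F.map P Q hP₁ hP₂ hQ₁ hQ₂ R (i.baseChange R) = LinearMap.id := by
    rw [← F.map_comp P Q P hP₁ hP₂ hQ₁ hQ₂ hP₁ hP₂ R, ← LinearMap.baseChange_comp, hpi]
    have : (LinearMap.id : ↥P →ₗ[R] ↥P).baseChange R = LinearMap.id := by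
      ext x; simp
    rw [this, F.map_id]
  have hsubP : Subsingleton (R ⊗[R] ↥(F.obj P hP₁ hP₂)) := by
    constructor
    intro a b
    have ha : a = F.map Q P hQ₁ hQ₂ hP₁ hP₂ R (p.baseChange R)
        (F.map P Q hP₁ hP₂ hQ₁ hQ₂ R (i.baseChange R) a) := by
      rw [← LinearMap.comp_apply, key, LinearMap.id_apply]
    have hb : b = F.map Q P hQ₁ hQ₂ hP₁ hP₂ R (p.baseChange R)
        (F.map P Q hP₁ hP₂ hQ₁ hQ₂ R (i.baseChange R) b) := by
      rw [← LinearMap.comp_apply, key, LinearMap.id_apply]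
    rw [ha, hb, Subsingleton.elim (F.map P Q hP₁ hP₂ hQ₁ hQ₂ R (i.baseChange R) a)
      (F.map P Q hP₁ hP₂ hQ₁ hQ₂ R (i.baseChange R) b)]
  exact (TensorProduct.lid R ↥(F.obj P hP₁ hP₂)).symm.toEquiv.subsingleton

/- coefficient transport lemmas -/

noncomputable def scalarRTensor {σ : Type*} {N : Type*} [AddCommGroup N] [Module R N] :
    MvPolynomial σ R ⊗[R] N ≃ₗ[R] (σ →₀ ℕ) →₀ N :=
  by
    classical
    exact TensorProduct.congr (AddMonoidAlgebra.coeffLinearEquiv (S := R) (M := σ →₀ ℕ) R)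
      (LinearEquiv.refl R N) ≪≫ₗ TensorProduct.finsuppScalarLeft R N _

theorem scalarRTensor_apply_tmul_apply {σ : Type*} {N : Type*} [AddCommGroup N] [Module R N]
    (p : MvPolynomial σ R) (n : N) (d : σ →₀ ℕ) :
    scalarRTensor (p ⊗ₜ[R] n) d = coeff d p • n := by
  simp [scalarRTensor]
  rfl

theorem scalarRTensor_apply_monomial_tmul {σ : Type*} [DecidableEq σ] {N : Type*}
    [AddCommGroup N] [Module R N] (e : σ →₀ ℕ) (r : R) (n : N) (d : σ →₀ ℕ) :
    scalarRTensor (monomial e r ⊗ₜ[R] n) d = if e = d then r • n else 0 := by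
  rw [scalarRTensor_apply_tmul_apply, coeff_monomial, ite_smul, zero_smul]

theorem coeff_rTensor_eq {σ σ' : Type*} [DecidableEq σ] [DecidableEq σ']
    {V : Type u} [AddCommGroup V] [Module R V]
    (φ : MvPolynomial σ R →ₐ[R] MvPolynomial σ' R) (d : σ →₀ ℕ) (d' : σ' →₀ ℕ)
    (h : ∀ e : σ →₀ ℕ, coeff d' (φ (monomial e 1)) = if e = d then 1 else 0)
    (w : MvPolynomial σ R ⊗[R] V) :
    scalarRTensor (LinearMap.rTensor V φ.toLinearMap w) d' = scalarRTensor w d := by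
  induction w using TensorProduct.induction_on with
  | zero => simp
  | add x y hx hy => simp only [map_add, Finsupp.add_apply, hx, hy]
  | tmul p v =>
    induction p using MvPolynomial.induction_on' with
    | add p q hp hq =>
      rw [add_tmul]
      simp only [map_add, Finsupp.add_apply, hp, hq]
    | monomial e r =>
      rw [LinearMap.rTensor_tmul]
      simp only [AlgHom.toLinearMap_apply]
      rw [scalarRTensor_apply_tmul_apply, scalarRTensor_apply_monomial_tmul]
      have : (monomial e r : MvPolynomial σ R) = r • monomial e 1 := by
        rw [smul_monomial, smul_eq_mul, mul_one]
      rw [this, map_smul, coeff_smul, h, smul_eq_mul]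
      split <;> simp

theorem coeff_rTensor_zero {σ σ' : Type*} [DecidableEq σ] [DecidableEq σ']
    {V : Type u} [AddCommGroup V] [Module R V]
    (φ : MvPolynomial σ R →ₐ[R] MvPolynomial σ' R) (d' : σ' →₀ ℕ)
    (h : ∀ e : σ →₀ ℕ, coeff d' (φ (monomial e 1)) = 0)
    (w : MvPolynomial σ R ⊗[R] V) :
    scalarRTensor (LinearMap.rTensor V φ.toLinearMap w) d' = 0 := by
  induction w using TensorProduct.induction_on with
  | zero => simp
  | add x y hx hy => simp only [map_add, Finsupp.add_apply, hx, hy, add_zero]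
  | tmul p v =>
    induction p using MvPolynomial.induction_on' with
    | add p q hp hq =>
      rw [add_tmul]
      simp only [map_add, Finsupp.add_apply, hp, hq, add_zero]
    | monomial e r =>
      rw [LinearMap.rTensor_tmul]
      simp only [AlgHom.toLinearMap_apply]
      rw [scalarRTensor_apply_tmul_apply]
      have : (monomial e r : MvPolynomial σ R) = r • monomial e 1 := by
        rw [smul_monomial, smul_eq_mul, mul_one]
      rw [this, map_smul, coeff_smul, h, smul_zero, zero_smul]

theorem coeff_monomial_smul {σ' : Type*} [DecidableEq σ']
    {V : Type u} [AddCommGroup V] [Module R V]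
    (a b : σ' →₀ ℕ) (x : MvPolynomial σ' R ⊗[R] V) :
    scalarRTensor ((monomial a 1 : MvPolynomial σ' R) • x) (a + b) = scalarRTensor x b := by
  induction x using TensorProduct.induction_on with
  | zero => simp
  | add x y hx hy => simp only [smul_add, map_add, Finsupp.add_apply, hx, hy]
  | tmul p v =>
    rw [smul_tmul', scalarRTensor_apply_tmul_apply, scalarRTensor_apply_tmul_apply]
    congr 1
    rw [smul_eq_mul, coeff_monomial_mul, one_mul]

/- monomial computations for the substitutions -/

variable {m n : ℕ}

theorem prod_X_succ_eq (e : Fin m →₀ ℕ) :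
    (e.prod fun j k => ((X j.succ : MvPolynomial (Fin (m+1)) R)) ^ k)
      = monomial (e.mapDomain Fin.succ) 1 := by
  rw [monomial_eq, C_1, one_mul, Finsupp.prod_mapDomain_index_inj (Fin.succ_injective _)]

theorem aeval_rho_monomial (e : Fin m →₀ ℕ) :
    aeval (fun j : Fin m => (X j.succ : MvPolynomial (Fin (m+1)) R)) (monomial e (1:R))
      = monomial (e.mapDomain Fin.succ) 1 := by
  rw [aeval_monomial, map_one, one_mul, prod_X_succ_eq]

theorem aeval_phi_monomial (e : Fin m →₀ ℕ) :
    aeval (fun j : Fin m => (X 0 * X j.succ : MvPolynomial (Fin (m+1)) R)) (monomial e (1:R))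
      = monomial (Finsupp.single 0 (e.sum fun _ k => k) + e.mapDomain Fin.succ) 1 := by
  rw [aeval_monomial, map_one, one_mul]
  have h1 : (e.prod fun j k => ((X 0 * X j.succ : MvPolynomial (Fin (m+1)) R)) ^ k)
      = (X 0) ^ (e.sum fun _ k => k) * e.prod (fun j k => (X j.succ) ^ k) := by
    rw [Finsupp.prod, Finsupp.sum, Finsupp.prod, ← Finset.prod_pow_eq_pow_sum,
      ← Finset.prod_mul_distrib]
    exact Finset.prod_congr rfl fun j _ => mul_pow _ _ _
  rw [h1, prod_X_succ_eq, X_pow_eq_monomial, monomial_mul, one_mul]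

theorem key_inj (e d : Fin m →₀ ℕ) (N : ℕ)
    (h : Finsupp.single (0 : Fin (m+1)) (e.sum fun _ k => k) + e.mapDomain Fin.succ
        = Finsupp.single 0 N + d.mapDomain Fin.succ) :
    (e.sum fun _ k => k) = N ∧ e = d := by
  have h0 : ∀ f : Fin m →₀ ℕ, f.mapDomain Fin.succ 0 = 0 := fun f =>
    Finsupp.mapDomain_notin_range _ _ (by simp [Set.range, Fin.succ_ne_zero])
  have hsum : (e.sum fun _ k => k) = N := by
    have := congrArg (fun f : Fin (m+1) →₀ ℕ => f 0) h
    simpa [h0] using this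
  refine ⟨hsum, ?_⟩
  rw [hsum] at h
  exact Finsupp.mapDomain_injective (Fin.succ_injective _) (add_left_cancel h)

theorem aeval_psi_monomial_mem (u : Fin m → Prop) [DecidablePred u] (e : Fin m →₀ ℕ)
    (he : ∀ j ∈ e.support, u j) :
    aeval (fun j : Fin m => if u j then (X j : MvPolynomial (Fin m) R) else 0)
      (monomial e (1:R)) = monomial e 1 := by
  rw [aeval_monomial, map_one, one_mul, monomial_eq, C_1, one_mul]
  apply Finsupp.prod_congr
  intro j hj
  rw [if_pos (he j hj)]

theorem aeval_psi_monomial_notmem (u : Fin m → Prop) [DecidablePred u] (e : Fin m →₀ ℕ)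
    (he : ¬ ∀ j ∈ e.support, u j) :
    aeval (fun j : Fin m => if u j then (X j : MvPolynomial (Fin m) R) else 0)
      (monomial e (1:R)) = 0 := by
  push_neg at he
  obtain ⟨j₀, hj₀, hju⟩ := he
  rw [aeval_monomial, map_one, one_mul, Finsupp.prod]
  apply Finset.prod_eq_zero hj₀
  rw [if_neg hju, zero_pow]
  simpa using hj₀

/- splittings between free modules -/

noncomputable def iotaU (R : Type u) [CommRing R] {k l : ℕ} (u : Fin k → Fin l) :
    (Fin k → R) →ₗ[R] (Fin l → R) :=
  ∑ i : Fin k, (LinearMap.single R (fun _ => R) (u i)) ∘ₗ (LinearMap.proj i)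

noncomputable def piU (R : Type u) [CommRing R] {k l : ℕ} (u : Fin k → Fin l) :
    (Fin l → R) →ₗ[R] (Fin k → R) := LinearMap.funLeft R R u

theorem iotaU_apply {k l : ℕ} (u : Fin k → Fin l) (g : Fin k → R) (j : Fin l) :
    iotaU R u g j = ∑ i : Fin k, (Pi.single (u i) (g i) : Fin l → R) j := by
  simp [iotaU]

theorem iotaU_apply_of_notin {k l : ℕ} (u : Fin k → Fin l) (g : Fin k → R) (j : Fin l)
    (hj : j ∉ Set.range u) : iotaU R u g j = 0 := by
  rw [iotaU_apply]
  apply Finset.sum_eq_zero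
  intro i _
  rw [Pi.single_apply, if_neg]
  exact fun h => hj ⟨i, h.symm⟩

theorem iotaU_apply_at {k l : ℕ} {u : Fin k → Fin l} (hu : Function.Injective u)
    (g : Fin k → R) (i₀ : Fin k) : iotaU R u g (u i₀) = g i₀ := by
  rw [iotaU_apply, Finset.sum_eq_single i₀]
  · simp
  · intro i _ hne
    rw [Pi.single_apply, if_neg]
    exact fun h => hne (hu h.symm)
  · simp

theorem piU_comp_iotaU {k l : ℕ} {u : Fin k → Fin l} (hu : Function.Injective u) :
    piU R u ∘ₗ iotaU R u = LinearMap.id := by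
  refine LinearMap.ext fun g => funext fun i => ?_
  simpa [piU] using iotaU_apply_at hu g i

/- the diagonal endomorphism -/

noncomputable def ebasis (j : Fin m) : (Fin m → R) →ₗ[R] (Fin m → R) :=
  (LinearMap.single R (fun _ => R) j) ∘ₗ (LinearMap.proj j)

theorem ebasis_apply (j : Fin m) (y : Fin m → R) : ebasis j y = Pi.single j (y j) := by
  simp [ebasis]

theorem sum_ebasis_apply (y : Fin m → R) : ∑ j : Fin m, ebasis (R := R) j y = y := by
  funext i
  simp [ebasis_apply, Finset.sum_apply, Pi.single_apply]

noncomputable def Dmap (S : Type u) [CommRing S] [Algebra R S] (t : Fin m → S) :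
    S ⊗[R] (Fin m → R) →ₗ[S] S ⊗[R] (Fin m → R) :=
  ∑ j : Fin m, t j • (ebasis j).baseChange S

theorem Dmap_tmul (S : Type u) [CommRing S] [Algebra R S] (t : Fin m → S) (p : S)
    (y : Fin m → R) :
    Dmap S t (p ⊗ₜ[R] y) = ∑ j : Fin m, (t j * p) ⊗ₜ[R] ebasis j y := by
  simp only [Dmap, LinearMap.sum_apply, LinearMap.smul_apply, LinearMap.baseChange_tmul,
    smul_tmul', smul_eq_mul]

theorem Dmap_smul (S : Type u) [CommRing S] [Algebra R S] (s : S) (t : Fin m → S) :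
    Dmap (R := R) S (fun j => s * t j) = s • Dmap (R := R) S t := by
  simp only [Dmap, mul_smul, ← Finset.smul_sum]

theorem Dmap_baseChange {S S' : Type u} [CommRing S] [Algebra R S] [CommRing S']
    [Algebra R S'] (φ : S →ₐ[R] S') (t : Fin m → S) (t' : Fin m → S')
    (ht : ∀ j, φ (t j) = t' j) (x : S ⊗[R] (Fin m → R)) :
    Dmap S' t' (LinearMap.rTensor (Fin m → R) φ.toLinearMap x)
      = LinearMap.rTensor (Fin m → R) φ.toLinearMap (Dmap S t x) := by
  induction x using TensorProduct.induction_on with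
  | zero => simp
  | add x y hx hy => simp only [map_add, hx, hy]
  | tmul p y =>
    rw [LinearMap.rTensor_tmul, AlgHom.toLinearMap_apply, Dmap_tmul, Dmap_tmul, map_sum]
    refine Finset.sum_congr rfl fun j _ => ?_
    rw [LinearMap.rTensor_tmul, AlgHom.toLinearMap_apply, map_mul, ht]

noncomputable def psiA (R : Type u) [CommRing R] {m n : ℕ} (u : Fin n → Fin m) :
    MvPolynomial (Fin m) R →ₐ[R] MvPolynomial (Fin m) R :=
  aeval (fun j => if j ∈ Finset.image u Finset.univ then X j else 0)

theorem cond_psi (u : Fin n → Fin m) (hu : Function.Injective u)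
    (x : MvPolynomial (Fin m) R ⊗[R] (Fin m → R)) :
    (Dmap (MvPolynomial (Fin m) R) (fun j => X j) ∘ₗ
        ((iotaU R u ∘ₗ piU R u).baseChange (MvPolynomial (Fin m) R)))
      (LinearMap.rTensor (Fin m → R) (psiA R u).toLinearMap x)
    = LinearMap.rTensor (Fin m → R) (psiA R u).toLinearMap
        (Dmap (MvPolynomial (Fin m) R) (fun j => X j) x) := by
  induction x using TensorProduct.induction_on with
  | zero => simp
  | add x y hx hy => simp only [map_add, hx, hy]
  | tmul p y =>
    rw [LinearMap.rTensor_tmul, AlgHom.toLinearMap_apply, LinearMap.comp_apply,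
      LinearMap.baseChange_tmul, Dmap_tmul, Dmap_tmul, map_sum]
    refine Finset.sum_congr rfl fun j _ => ?_
    rw [LinearMap.rTensor_tmul, AlgHom.toLinearMap_apply, map_mul]
    have hXj : (psiA R u) (X j) = if j ∈ Finset.image u Finset.univ then X j else 0 := by
      simp [psiA]
    by_cases hj : j ∈ Finset.image u Finset.univ
    · rw [hXj, if_pos hj]
      obtain ⟨i₀, -, rfl⟩ := Finset.mem_image.mp hj
      have h1 : ebasis (R := R) (u i₀) ((iotaU R u ∘ₗ piU R u) y)
          = ebasis (R := R) (u i₀) y := by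
        rw [ebasis_apply, ebasis_apply, LinearMap.comp_apply, iotaU_apply_at hu]
        rfl
      rw [h1]
    · rw [hXj, if_neg hj, zero_mul, zero_tmul]
      have h0 : ebasis (R := R) j ((iotaU R u ∘ₗ piU R u) y) = 0 := by
        rw [ebasis_apply, LinearMap.comp_apply, iotaU_apply_of_notin]
        · exact Pi.single_zero j
        · intro hr
          exact hj (Finset.mem_image.mpr ⟨hr.choose, Finset.mem_univ _, hr.choose_spec⟩)
      rw [h0, tmul_zero]

theorem cond_eps (x : MvPolynomial (Fin m) R ⊗[R] (Fin m → R)) :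
    (LinearMap.id : R ⊗[R] (Fin m → R) →ₗ[R] R ⊗[R] (Fin m → R))
      (LinearMap.rTensor (Fin m → R)
        (aeval (R := R) (fun _ : Fin m => (1:R))).toLinearMap x)
    = LinearMap.rTensor (Fin m → R) (aeval (R := R) (fun _ : Fin m => (1:R))).toLinearMap
        (Dmap (MvPolynomial (Fin m) R) (fun j => X j) x) := by
  induction x using TensorProduct.induction_on with
  | zero => simp
  | add x y hx hy => simp only [map_add, hx, hy]
  | tmul p y =>
    rw [LinearMap.id_apply, LinearMap.rTensor_tmul, Dmap_tmul, map_sum]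
    have : ∀ j : Fin m, LinearMap.rTensor (Fin m → R)
        (aeval (R := R) (fun _ : Fin m => (1:R))).toLinearMap ((X j * p) ⊗ₜ[R] ebasis j y)
        = (aeval (R := R) (fun _ : Fin m => (1:R))) p ⊗ₜ[R] ebasis j y := by
      intro j
      rw [LinearMap.rTensor_tmul, AlgHom.toLinearMap_apply, map_mul, aeval_X, one_mul]
    rw [Finset.sum_congr rfl fun j _ => this j, ← tmul_sum, sum_ebasis_apply]
    rfl

/- the free case -/

set_option maxHeartbeats 1000000 in
theorem free_case (F : SPF R) (n : ℕ) (hF : F.Homog n)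
    (h₁ : Module.Finite R ↥(ModuleCat.of R (Fin n → R)))
    (h₂ : Module.Projective R ↥(ModuleCat.of R (Fin n → R)))
    (hzero : Subsingleton ↥(F.obj (ModuleCat.of R (Fin n → R)) h₁ h₂))
    (m : ℕ) (hnm : n ≤ m)
    (hm₁ : Module.Finite R ↥(ModuleCat.of R (Fin m → R)))
    (hm₂ : Module.Projective R ↥(ModuleCat.of R (Fin m → R))) :
    Subsingleton ↥(F.obj (ModuleCat.of R (Fin m → R)) hm₁ hm₂) := by
  suffices hv : ∀ v : ↥(F.obj (ModuleCat.of R (Fin m → R)) hm₁ hm₂), v = 0 by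
    exact ⟨fun a b => by rw [hv a, hv b]⟩
  intro v
  set w : MvPolynomial (Fin m) R ⊗[R] ↥(F.obj (ModuleCat.of R (Fin m → R)) hm₁ hm₂) :=
    F.map (ModuleCat.of R (Fin m → R)) (ModuleCat.of R (Fin m → R)) hm₁ hm₂ hm₁ hm₂
      (MvPolynomial (Fin m) R) (Dmap (MvPolynomial (Fin m) R) (fun j => X j))
      ((1 : MvPolynomial (Fin m) R) ⊗ₜ[R] v) with hw
  -- Step A : coefficients of total degree ≠ n vanish
  have stepA : ∀ d : Fin m →₀ ℕ, (d.sum fun _ k => k) ≠ n → scalarRTensor w d = 0 := by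
    intro d hd
    have hbφ := F.map_baseChange (ModuleCat.of R (Fin m → R)) (ModuleCat.of R (Fin m → R))
      hm₁ hm₂ hm₁ hm₂ (MvPolynomial (Fin m) R) (MvPolynomial (Fin (m+1)) R)
      (aeval (fun j : Fin m => X 0 * X j.succ))
      (Dmap (MvPolynomial (Fin m) R) (fun j => X j))
      (Dmap (MvPolynomial (Fin (m+1)) R) (fun j : Fin m => X 0 * X j.succ))
      (Dmap_baseChange (aeval (fun j : Fin m => X 0 * X j.succ)) _ _
        (fun j => aeval_X _ j)) ((1 : MvPolynomial (Fin m) R) ⊗ₜ[R] v)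
    have hbρ := F.map_baseChange (ModuleCat.of R (Fin m → R)) (ModuleCat.of R (Fin m → R))
      hm₁ hm₂ hm₁ hm₂ (MvPolynomial (Fin m) R) (MvPolynomial (Fin (m+1)) R)
      (aeval (fun j : Fin m => X j.succ))
      (Dmap (MvPolynomial (Fin m) R) (fun j => X j))
      (Dmap (MvPolynomial (Fin (m+1)) R) (fun j : Fin m => X j.succ))
      (Dmap_baseChange (aeval (fun j : Fin m => X j.succ)) _ _
        (fun j => aeval_X _ j)) ((1 : MvPolynomial (Fin m) R) ⊗ₜ[R] v)
    have h1φ : LinearMap.rTensor ↥(F.obj (ModuleCat.of R (Fin m → R)) hm₁ hm₂)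
        (aeval (R := R) (fun j : Fin m =>
          (X 0 * X j.succ : MvPolynomial (Fin (m+1)) R))).toLinearMap
        ((1 : MvPolynomial (Fin m) R) ⊗ₜ[R] v)
        = (1 : MvPolynomial (Fin (m+1)) R) ⊗ₜ[R] v := by
      rw [LinearMap.rTensor_tmul, AlgHom.toLinearMap_apply, map_one]
    have h1ρ : LinearMap.rTensor ↥(F.obj (ModuleCat.of R (Fin m → R)) hm₁ hm₂)
        (aeval (R := R) (fun j : Fin m =>
          (X j.succ : MvPolynomial (Fin (m+1)) R))).toLinearMap
        ((1 : MvPolynomial (Fin m) R) ⊗ₜ[R] v)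
        = (1 : MvPolynomial (Fin (m+1)) R) ⊗ₜ[R] v := by
      rw [LinearMap.rTensor_tmul, AlgHom.toLinearMap_apply, map_one]
    rw [h1φ] at hbφ
    rw [h1ρ] at hbρ
    have hsm : Dmap (R := R) (MvPolynomial (Fin (m+1)) R) (fun j : Fin m => X 0 * X j.succ)
        = ((X 0 : MvPolynomial (Fin (m+1)) R) • LinearMap.id) ∘ₗ
            Dmap (MvPolynomial (Fin (m+1)) R) (fun j : Fin m => X j.succ) := by
      rw [Dmap_smul]
      refine LinearMap.ext fun x => ?_
      simp
    have hFsm : F.map (ModuleCat.of R (Fin m → R)) (ModuleCat.of R (Fin m → R))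
          hm₁ hm₂ hm₁ hm₂ (MvPolynomial (Fin (m+1)) R)
          (Dmap (MvPolynomial (Fin (m+1)) R) (fun j : Fin m => X 0 * X j.succ))
        = (X 0 : MvPolynomial (Fin (m+1)) R) ^ n •
            F.map (ModuleCat.of R (Fin m → R)) (ModuleCat.of R (Fin m → R))
              hm₁ hm₂ hm₁ hm₂ (MvPolynomial (Fin (m+1)) R)
              (Dmap (MvPolynomial (Fin (m+1)) R) (fun j : Fin m => X j.succ)) := by
      rw [hsm, F.map_comp (ModuleCat.of R (Fin m → R)) (ModuleCat.of R (Fin m → R))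
        (ModuleCat.of R (Fin m → R)) hm₁ hm₂ hm₁ hm₂ hm₁ hm₂ (MvPolynomial (Fin (m+1)) R),
        hF (ModuleCat.of R (Fin m → R)) hm₁ hm₂ (MvPolynomial (Fin (m+1)) R) (X 0)]
      refine LinearMap.ext fun x => ?_
      simp
    have keyeq : LinearMap.rTensor ↥(F.obj (ModuleCat.of R (Fin m → R)) hm₁ hm₂)
          (aeval (R := R) (fun j : Fin m =>
            (X 0 * X j.succ : MvPolynomial (Fin (m+1)) R))).toLinearMap w
        = (X 0 : MvPolynomial (Fin (m+1)) R) ^ n •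
            LinearMap.rTensor ↥(F.obj (ModuleCat.of R (Fin m → R)) hm₁ hm₂)
              (aeval (R := R) (fun j : Fin m =>
                (X j.succ : MvPolynomial (Fin (m+1)) R))).toLinearMap w := by
      rw [← hbφ, ← hbρ, hFsm]
      simp
    have hL : scalarRTensor (LinearMap.rTensor
          ↥(F.obj (ModuleCat.of R (Fin m → R)) hm₁ hm₂)
          (aeval (R := R) (fun j : Fin m =>
            (X 0 * X j.succ : MvPolynomial (Fin (m+1)) R))).toLinearMap w)
        (Finsupp.single 0 n + d.mapDomain Fin.succ) = 0 := by
      apply coeff_rTensor_zero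
      intro e
      rw [aeval_phi_monomial, coeff_monomial, if_neg]
      intro hc
      obtain ⟨hs, he⟩ := key_inj e d n hc
      exact hd (he ▸ hs)
    have hR : scalarRTensor ((X 0 : MvPolynomial (Fin (m+1)) R) ^ n •
          LinearMap.rTensor ↥(F.obj (ModuleCat.of R (Fin m → R)) hm₁ hm₂)
            (aeval (R := R) (fun j : Fin m =>
              (X j.succ : MvPolynomial (Fin (m+1)) R))).toLinearMap w)
        (Finsupp.single 0 n + d.mapDomain Fin.succ) = scalarRTensor w d := by
      rw [X_pow_eq_monomial, coeff_monomial_smul]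
      apply coeff_rTensor_eq
      intro e
      rw [aeval_rho_monomial, coeff_monomial]
      by_cases he : e = d
      · subst he
        rw [if_pos rfl, if_pos rfl]
      · rw [if_neg, if_neg he]
        exact fun hc => he (Finsupp.mapDomain_injective (Fin.succ_injective _) hc)
    rw [keyeq, hR] at hL
    exact hL
  -- Step B : coefficients supported in the range of an injection from `Fin n` vanish
  have stepB : ∀ (u : Fin n → Fin m), Function.Injective u → ∀ d : Fin m →₀ ℕ,
      (∀ j ∈ d.support, j ∈ Finset.image u Finset.univ) → scalarRTensor w d = 0 := by
    intro u hu d hsupp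
    have hbψ := F.map_baseChange (ModuleCat.of R (Fin m → R)) (ModuleCat.of R (Fin m → R))
      hm₁ hm₂ hm₁ hm₂ (MvPolynomial (Fin m) R) (MvPolynomial (Fin m) R) (psiA R u)
      (Dmap (MvPolynomial (Fin m) R) (fun j => X j))
      (Dmap (MvPolynomial (Fin m) R) (fun j => X j) ∘ₗ
        ((iotaU R u ∘ₗ piU R u).baseChange (MvPolynomial (Fin m) R)))
      (cond_psi u hu) ((1 : MvPolynomial (Fin m) R) ⊗ₜ[R] v)
    have hmap0 : F.map (ModuleCat.of R (Fin n → R)) (ModuleCat.of R (Fin m → R))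
        h₁ h₂ hm₁ hm₂ (MvPolynomial (Fin m) R)
        ((iotaU R u).baseChange (MvPolynomial (Fin m) R)) = 0 := by
      have hzS : Subsingleton (MvPolynomial (Fin m) R ⊗[R]
          ↥(F.obj (ModuleCat.of R (Fin n → R)) h₁ h₂)) :=
        subs_tensor (MvPolynomial (Fin m) R) _ hzero
      refine LinearMap.ext fun x => ?_
      rw [Subsingleton.elim x 0, map_zero]
      rfl
    have hcomp : F.map (ModuleCat.of R (Fin m → R)) (ModuleCat.of R (Fin m → R))
        hm₁ hm₂ hm₁ hm₂ (MvPolynomial (Fin m) R)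
        (Dmap (MvPolynomial (Fin m) R) (fun j => X j) ∘ₗ
          ((iotaU R u ∘ₗ piU R u).baseChange (MvPolynomial (Fin m) R))) = 0 := by
      rw [F.map_comp (ModuleCat.of R (Fin m → R)) (ModuleCat.of R (Fin m → R))
        (ModuleCat.of R (Fin m → R)) hm₁ hm₂ hm₁ hm₂ hm₁ hm₂ (MvPolynomial (Fin m) R)
        (Dmap (MvPolynomial (Fin m) R) (fun j => X j)), LinearMap.baseChange_comp,
        F.map_comp (ModuleCat.of R (Fin m → R)) (ModuleCat.of R (Fin n → R))
        (ModuleCat.of R (Fin m → R)) hm₁ hm₂ h₁ h₂ hm₁ hm₂ (MvPolynomial (Fin m) R)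
        ((iotaU R u).baseChange (MvPolynomial (Fin m) R))
        ((piU R u).baseChange (MvPolynomial (Fin m) R)), hmap0]
      simp
    rw [hcomp] at hbψ
    have hψw : LinearMap.rTensor ↥(F.obj (ModuleCat.of R (Fin m → R)) hm₁ hm₂)
        (psiA R u).toLinearMap w = 0 := by
      rw [← hbψ]
      rfl
    have hcoeff := coeff_rTensor_eq (psiA R u) d d ?_ w
    · rw [hψw] at hcoeff
      simpa using hcoeff.symm
    · intro e
      by_cases hesupp : ∀ j ∈ e.support, j ∈ Finset.image u Finset.univ
      · rw [show (psiA R u) (monomial e 1) = monomial e 1 from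
          aeval_psi_monomial_mem _ e hesupp, coeff_monomial]
      · rw [show (psiA R u) (monomial e 1) = 0 from
          aeval_psi_monomial_notmem _ e hesupp, coeff_zero, if_neg]
        exact fun hed => hesupp (hed ▸ hsupp)
  -- Step C : all coefficients vanish
  have stepC : ∀ d : Fin m →₀ ℕ, scalarRTensor w d = 0 := by
    intro d
    by_cases hd : (d.sum fun _ k => k) = n
    · have hcard : d.support.card ≤ n := by
        rw [← hd]
        calc d.support.card = ∑ _j ∈ d.support, 1 := by simp
          _ ≤ ∑ j ∈ d.support, d j := Finset.sum_le_sum (fun j hj =>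
              Nat.one_le_iff_ne_zero.mpr (Finsupp.mem_support_iff.mp hj))
          _ = d.sum fun _ k => k := rfl
      obtain ⟨t, hst, hcardt⟩ := Finset.exists_superset_card_eq hcard
        (by simpa using hnm)
      refine stepB (t.orderEmbOfFin hcardt) (t.orderEmbOfFin hcardt).injective d ?_
      intro j hj
      have hjt : j ∈ t := hst hj
      have hjr : j ∈ Set.range (t.orderEmbOfFin hcardt) := by
        rw [Finset.range_orderEmbOfFin]
        exact hjt
      obtain ⟨i, hi⟩ := hjr
      exact Finset.mem_image.mpr ⟨i, Finset.mem_univ _, hi⟩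
    · exact stepA d hd
  have hw0 : w = 0 := by
    have hc : scalarRTensor w = 0 := Finsupp.ext fun d => by
      rw [stepC d]
      rfl
    exact (LinearEquiv.map_eq_zero_iff scalarRTensor).mp hc
  -- Step D : evaluate at 1
  have hbε := F.map_baseChange (ModuleCat.of R (Fin m → R)) (ModuleCat.of R (Fin m → R))
    hm₁ hm₂ hm₁ hm₂ (MvPolynomial (Fin m) R) R
    (aeval (R := R) (fun _ : Fin m => (1:R)))
    (Dmap (MvPolynomial (Fin m) R) (fun j => X j)) LinearMap.id cond_eps
    ((1 : MvPolynomial (Fin m) R) ⊗ₜ[R] v)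
  rw [F.map_id] at hbε
  have h1ε : LinearMap.rTensor ↥(F.obj (ModuleCat.of R (Fin m → R)) hm₁ hm₂)
      (aeval (R := R) (fun _ : Fin m => (1:R))).toLinearMap
      ((1 : MvPolynomial (Fin m) R) ⊗ₜ[R] v) = (1:R) ⊗ₜ[R] v := by
    rw [LinearMap.rTensor_tmul, AlgHom.toLinearMap_apply, map_one]
  rw [LinearMap.id_apply, h1ε, ← hw, hw0, map_zero] at hbε
  have hfin := congrArg (TensorProduct.lid R ↥(F.obj (ModuleCat.of R (Fin m → R)) hm₁ hm₂)) hbε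
  rwa [TensorProduct.lid_tmul, one_smul, map_zero] at hfin

end SPFProofAux

/-- If a homogeneous strict polynomial functor of degree `n` over a commutative
Noetherian ring vanishes on `Rⁿ`, it vanishes on every finitely generated
projective module. -/
theorem spf_vanishes_of_vanishes_on_free (R : Type u) [CommRing R] [IsNoetherianRing R]
    (F : SPF R) (n : ℕ) (hF : F.Homog n)
    (h₁ : Module.Finite R ↥(ModuleCat.of R (Fin n → R)))
    (h₂ : Module.Projective R ↥(ModuleCat.of R (Fin n → R)))
    (hzero : Subsingleton ↥(F.obj (ModuleCat.of R (Fin n → R)) h₁ h₂)) :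
    ∀ (P : ModuleCat.{u} R) (hP₁ : Module.Finite R ↥P) (hP₂ : Module.Projective R ↥P),
      Subsingleton ↥(F.obj P hP₁ hP₂) := by
  intro P hP₁ hP₂
  haveI := hP₁
  haveI := hP₂
  obtain ⟨m, π, hπ⟩ := Module.Finite.exists_fin' R ↥P
  obtain ⟨σ, hσ⟩ := Module.projective_lifting_property π LinearMap.id hπ
  set m' := max m n with hm'
  set u : Fin m → Fin m' := Fin.castLE (le_max_left m n) with hu
  have hui : Function.Injective u := Fin.castLE_injective _
  have hm'₁ : Module.Finite R ↥(ModuleCat.of R (Fin m' → R)) :=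
    show Module.Finite R (Fin m' → R) from inferInstance
  have hm'₂ : Module.Projective R ↥(ModuleCat.of R (Fin m' → R)) :=
    show Module.Projective R (Fin m' → R) from inferInstance
  refine SPFProofAux.retract F P (ModuleCat.of R (Fin m' → R)) hP₁ hP₂ hm'₁ hm'₂
    (SPFProofAux.iotaU R u ∘ₗ σ) (π ∘ₗ SPFProofAux.piU R u) ?_ ?_
  · refine LinearMap.ext fun x => ?_
    have h3 : SPFProofAux.piU R u (SPFProofAux.iotaU R u (σ x)) = σ x := by
      have := congrArg (fun f => f (σ x)) (SPFProofAux.piU_comp_iotaU (R := R) hui)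
      simpa using this
    have h4 : π (σ x) = x := by
      have := congrArg (fun f => f x) hσ
      simpa using this
    simp only [LinearMap.comp_apply, LinearMap.id_apply]
    have h5 : π ((SPFProofAux.piU R u) ((SPFProofAux.iotaU R u) (σ x))) = x := by
      rw [h3, h4]
    exact h5
  · exact SPFProofAux.free_case F n hF h₁ h₂ hzero m' (le_max_right m n) hm'₁ hm'₂
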